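/- Let t be a g-term, σ a substitution list, r a closed g-term, and p ∈ valid(t) such that tσ[p] is closed and t[p] ∈ duplicates(r) (with the algorithm's preconditions: tσ is closed and t occurs at a position of SCC(r) in r). Then globalize_step(r, σ, t)[p] = globalize(tσ[p]). -/
import Mathlib


namespace HashAlpha

/-- g-terms: λ-terms with de Bruijn indices, extended with global variables `gvar t`. -/
inductive GTerm : Type
  | var : ℕ → GTerm
  | app : GTerm → GTerm → GTerm
  | lam : GTerm → GTerm
  | gvar : GTerm → GTerm
  deriving DecidableEq

/-- A g-term is a pure λ-term if it contains no global variables. -/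
def GTerm.IsPure : GTerm → Prop
  | .var _ => True
  | .app a b => a.IsPure ∧ b.IsPure
  | .lam a => a.IsPure
  | .gvar _ => False

/-- Directions for term positions: ↓, ↙, ↘. -/
inductive Dir : Type
  | down | left | right
  deriving DecidableEq

/-- A term position is a word over {↓, ↙, ↘}. -/
abbrev Pos := List Dir

/-- `|p|_λ`: the number of ↓'s in a position. -/
def lamDepth (p : Pos) : ℕ := p.count Dir.down

/-- Term indexing `t[p]` (partial; does not descend into global variables). -/
def GTerm.index : GTerm → Pos → Option GTerm
  | t, [] => some t
  | .app a _, .left :: p => a.index p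
  | .app _ b, .right :: p => b.index p
  | .lam a, .down :: p => a.index p
  | _, _ => none

/-- `valid(t)`: the set of positions where `t[p]` is defined. -/
def Valid (t : GTerm) : Set Pos := {p | (t.index p).isSome}

/-- `vars(t)`: positions of variables. -/
def Vars (t : GTerm) : Set Pos := {p | ∃ i, t.index p = some (.var i)}

/-- `free(t)`: positions of free variables. -/
def Free (t : GTerm) : Set Pos :=
  {p | ∃ i, t.index p = some (.var i) ∧ lamDepth p ≤ i}

/-- A term is closed if it has no free variables. -/
def Closed (t : GTerm) : Prop := Free t = ∅

/-- `p` is locally closed in `t`: every free variable of `t[p]` is also free in `t`. -/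
def LocallyClosed (t : GTerm) (p : Pos) : Prop :=
  p ∈ Valid t ∧ ∀ u, t.index p = some u → ∀ q ∈ Free u, p ++ q ∈ Free t

/-- Subtract `d0` from every free variable (`d` is the current binder depth). -/
def declift (d0 : ℕ) : GTerm → ℕ → GTerm
  | .var j, d => if d ≤ j then .var (j - d0) else .var j
  | .app a b, d => .app (declift d0 a d) (declift d0 b d)
  | .lam a, d => .lam (declift d0 a (d + 1))
  | .gvar a, _ => .gvar a

/-- The lift `⟨t⟩p`: equal to `t[p]` except every free variable of `t[p]` is
decremented by `|p|_λ`. -/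
def liftAt (t : GTerm) (p : Pos) : Option GTerm :=
  (t.index p).map (fun u => declift (lamDepth p) u 0)

/-- Transition labels: ↓, ↙, ↘ and ↑. -/
inductive Lab : Type
  | down | left | right | up
  deriving DecidableEq

def Lab.ofDir : Dir → Lab
  | .down => .down
  | .left => .left
  | .right => .right

/-- Transitions between term nodes. -/
inductive Trans : GTerm × Pos → Lab → GTerm × Pos → Prop
  | dir (t : GTerm) (p : Pos) (x : Dir) :
      (p ++ [x]) ∈ Valid t → Trans (t, p) (Lab.ofDir x) (t, p ++ [x])
  | up (t : GTerm) (q r : Pos) :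
      t.index (q ++ Dir.down :: r) = some (.var (lamDepth r)) →
      Trans (t, q ++ Dir.down :: r) Lab.up (t, q)

/-- `R` is a bisimulation. -/
def IsBisim (R : GTerm × Pos → GTerm × Pos → Prop) : Prop :=
  ∀ n₁ n₂, R n₁ n₂ → ∀ x : Lab,
    (∀ n₁', Trans n₁ x n₁' → ∃ n₂', Trans n₂ x n₂' ∧ R n₁' n₂') ∧
    (∀ n₂', Trans n₂ x n₂' → ∃ n₁', Trans n₁ x n₁' ∧ R n₁' n₂')

/-- Two nodes are bisimilar when some bisimulation relates them. -/
def Bisim (n₁ n₂ : GTerm × Pos) : Prop := ∃ R, IsBisim R ∧ R n₁ n₂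

/-- `(t, p)` is a term node: `t` is closed and `p ∈ valid(t)`. -/
def IsNode (t : GTerm) (p : Pos) : Prop := Closed t ∧ p ∈ Valid t

/-- A single fork between term nodes (let-abs rule or closed rule). -/
def SingleFork (n₁ n₂ : GTerm × Pos) : Prop :=
  (∃ t p q₁ q₂ r u,
      n₁ = (t, p ++ q₁ ++ r) ∧ n₂ = (t, p ++ q₂ ++ r) ∧
      IsNode t (p ++ q₁ ++ r) ∧ IsNode t (p ++ q₂ ++ r) ∧
      t.index p = some u ∧ LocallyClosed u q₁ ∧ liftAt u q₁ = liftAt u q₂) ∨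
  (∃ t₁ t₂ p₁ p₂ r u,
      n₁ = (t₁, p₁ ++ r) ∧ n₂ = (t₂, p₂ ++ r) ∧
      IsNode t₁ (p₁ ++ r) ∧ IsNode t₂ (p₂ ++ r) ∧
      t₁.index p₁ = some u ∧ Closed u ∧ t₂.index p₂ = some u)

/-- Fork equivalence: the transitive closure of single forks. -/
def ForkEquiv : GTerm × Pos → GTerm × Pos → Prop := Relation.TransGen SingleFork

/-- Shift free variables ≥ `c` up by `d`. -/
def shiftAux (c d : ℕ) : GTerm → GTerm
  | .var j => if j < c then .var j else .var (j + d)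
  | .app a b => .app (shiftAux c d a) (shiftAux c d b)
  | .lam a => .lam (shiftAux (c + 1) d a)
  | .gvar a => .gvar a

/-- Capture-avoiding substitution of free variable `i` by `u` (at current depth `d`). -/
def substAux (i : ℕ) (u : GTerm) : ℕ → GTerm → GTerm
  | d, .var j => if j = i + d then shiftAux 0 d u else .var j
  | d, .app a b => .app (substAux i u d a) (substAux i u d b)
  | d, .lam a => .lam (substAux i u (d + 1) a)
  | _, .gvar a => .gvar a

/-- `t[i := u]`: capture-avoiding substitution of variable `i` by `u` in `t`. -/
def subst (i : ℕ) (u : GTerm) (t : GTerm) : GTerm := substAux i u 0 t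

/-- Simultaneous capture-avoiding substitution of variable `i` by `σᵢ`
(at current depth `d`). -/
def msubstAux (σ : List GTerm) : ℕ → GTerm → GTerm
  | d, .var j =>
      if j < d then .var j else shiftAux 0 d (σ.getD (j - d) (.var (j - d)))
  | d, .app a b => .app (msubstAux σ d a) (msubstAux σ d b)
  | d, .lam a => .lam (msubstAux σ (d + 1) a)
  | _, .gvar a => .gvar a

/-- `tσ`: simultaneous substitution of each variable `i` by the `i`-th element of `σ`. -/
def msubst (σ : List GTerm) (t : GTerm) : GTerm := msubstAux σ 0 t

/-- Term size (the term summary `|t|`); global variables count as leaves. -/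
def gsize : GTerm → ℕ
  | .var _ => 1
  | .gvar _ => 1
  | .app a b => gsize a + gsize b + 1
  | .lam a => gsize a + 1

theorem gsize_shiftAux (c d : ℕ) (t : GTerm) : gsize (shiftAux c d t) = gsize t := by
  induction t generalizing c with
  | var j => simp only [shiftAux]; split <;> rfl
  | app a b iha ihb => simp [shiftAux, gsize, iha, ihb]
  | lam a ih => simp [shiftAux, gsize, ih]
  | gvar a => rfl

theorem gsize_substAux_gvar (i : ℕ) (w : GTerm) (d : ℕ) (t : GTerm) :
    gsize (substAux i (.gvar w) d t) = gsize t := by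
  induction t generalizing d with
  | var j => simp only [substAux]; split <;> rfl
  | app a b iha ihb => simp [substAux, gsize, iha, ihb]
  | lam a ih => simp [substAux, gsize, ih]
  | gvar a => rfl

theorem gsize_msubstAux (σ : List GTerm) (h : ∀ u ∈ σ, ∃ w, u = .gvar w)
    (d : ℕ) (t : GTerm) : gsize (msubstAux σ d t) = gsize t := by
  induction t generalizing d with
  | var j =>
    simp only [msubstAux]
    split
    · rfl
    · rw [gsize_shiftAux]
      rcases Nat.lt_or_ge (j - d) σ.length with hl | hl
      · rw [List.getD_eq_getElem _ _ hl]
        obtain ⟨w, hw⟩ := h _ (List.getElem_mem hl)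
        rw [hw]; rfl
      · rw [List.getD_eq_default _ _ hl]; rfl
  | app a b iha ihb => simp [msubstAux, gsize, iha, ihb]
  | lam a ih => simp [msubstAux, gsize, ih]
  | gvar a => rfl

theorem gsize_msubst (σ : List GTerm) (h : ∀ u ∈ σ, ∃ w, u = .gvar w)
    (t : GTerm) : gsize (msubst σ t) = gsize t :=
  gsize_msubstAux σ h 0 t

/-- The naive globalization procedure. -/
def globalizeNaive : GTerm → GTerm
  | .lam t => .lam (globalizeNaive (subst 0 (.gvar (.lam t)) t))
  | .app t u => .app (globalizeNaive t) (globalizeNaive u)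
  | .gvar t => .gvar t
  | .var i => .var i
termination_by t => gsize t
decreasing_by
  · simp only [subst, gsize_substAux_gvar, gsize]; omega
  · simp only [gsize]; omega
  · simp only [gsize]; omega

/-- The strongly connected component of a closed g-term: positions all of whose
nonempty prefixes index open terms. -/
def SCC (t : GTerm) : Set Pos :=
  {p | p ∈ Valid t ∧ ∀ p' u, p' ≠ [] → p' <+: p → t.index p' = some u → ¬ Closed u}

/-- `duplicates(t)`: strict subterms in the SCC of `t` whose term summary (size)
is not unique within the SCC. -/
def duplicates (t : GTerm) : Set GTerm :=
  {u | ∃ p q v, p ∈ SCC t ∧ q ∈ SCC t ∧ p ≠ [] ∧ q ≠ [] ∧ p ≠ q ∧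
      t.index p = some u ∧ t.index q = some v ∧ gsize u = gsize v}

open Classical in
mutual
/-- Efficient globalization. -/
noncomputable def globalize (r : GTerm) : GTerm :=
  globalizeScc r [] (by simp) r
termination_by (gsize r, 2)
decreasing_by
  apply Prod.Lex.right; omega

noncomputable def globalizeScc (r : GTerm) (σ : List GTerm)
    (h : ∀ u ∈ σ, ∃ w, u = GTerm.gvar w) : GTerm → GTerm
  | .lam t => .lam (globalizeStep r (.gvar (.app r t) :: σ)
      (by
        intro u hu
        rcases List.mem_cons.mp hu with h' | h'
        · exact ⟨_, h'⟩
        · exact h u h') t)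
  | .app t u => .app (globalizeStep r σ h t) (globalizeStep r σ h u)
  | .gvar t => .gvar t
  | .var i => msubst σ (.var i)
termination_by t => (gsize t, 1)
decreasing_by
  · apply Prod.Lex.left; simp only [gsize]; omega
  · apply Prod.Lex.left; simp only [gsize]; omega
  · apply Prod.Lex.left; simp only [gsize]; omega

noncomputable def globalizeStep (r : GTerm) (σ : List GTerm)
    (h : ∀ u ∈ σ, ∃ w, u = GTerm.gvar w) (t : GTerm) : GTerm :=
  if Closed t ∨ t ∈ duplicates r then globalize (msubst σ t)
  else globalizeScc r σ h t
termination_by (gsize t, 3)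
decreasing_by
  · rw [gsize_msubst σ h]; apply Prod.Lex.right; omega
  · apply Prod.Lex.right; omega
end

/-- Auxiliary closedness predicate: all free variables are `< d`. -/
def ClosedAt (d : ℕ) : GTerm → Prop
  | .var j => j < d
  | .app a b => ClosedAt d a ∧ ClosedAt d b
  | .lam a => ClosedAt (d + 1) a
  | .gvar _ => True

lemma index_nil (t : GTerm) : t.index [] = some t := by cases t <;> rfl

lemma lamDepth_down (q : Pos) : lamDepth (Dir.down :: q) = lamDepth q + 1 := by
  simp [lamDepth]

lemma lamDepth_left (q : Pos) : lamDepth (Dir.left :: q) = lamDepth q := by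
  simp [lamDepth]

lemma lamDepth_right (q : Pos) : lamDepth (Dir.right :: q) = lamDepth q := by
  simp [lamDepth]

lemma closedAt_iff (t : GTerm) : ∀ d, ClosedAt d t ↔
    ∀ p i, t.index p = some (.var i) → i < d + lamDepth p := by
  induction t with
  | var j =>
    intro d
    constructor
    · intro h p i hp
      cases p with
      | nil =>
        rw [index_nil] at hp
        injection hp with hp
        injection hp with hp
        simp only [ClosedAt] at h
        omega
      | cons x q => cases x <;> simp [GTerm.index] at hp
    · intro h
      have := h [] j (index_nil _)
      simp only [ClosedAt]
      simp only [lamDepth, List.count_nil] at this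
      omega
  | app a b iha ihb =>
    intro d
    constructor
    · rintro ⟨ha, hb⟩ p i hp
      cases p with
      | nil => simp [GTerm.index] at hp
      | cons x q =>
        cases x with
        | down => simp [GTerm.index] at hp
        | left =>
          have := (iha d).1 ha q i hp
          simpa [lamDepth] using this
        | right =>
          have := (ihb d).1 hb q i hp
          simpa [lamDepth] using this
    · intro h
      refine ⟨(iha d).2 ?_, (ihb d).2 ?_⟩
      · intro q i hq
        have := h (.left :: q) i hq
        simpa [lamDepth] using this
      · intro q i hq
        have := h (.right :: q) i hq
        simpa [lamDepth] using this
  | lam a iha =>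
    intro d
    constructor
    · intro h p i hp
      cases p with
      | nil => simp [GTerm.index] at hp
      | cons x q =>
        cases x with
        | left => simp [GTerm.index] at hp
        | right => simp [GTerm.index] at hp
        | down =>
          have := (iha (d + 1)).1 h q i hp
          simp only [lamDepth, List.count_cons_self] at *
          omega
    · intro h
      refine (iha (d + 1)).2 ?_
      intro q i hq
      have := h (.down :: q) i hq
      simp only [lamDepth, List.count_cons_self] at *
      omega
  | gvar a =>
    intro d
    constructor
    · intro _ p i hp
      cases p with
      | nil => simp [GTerm.index] at hp
      | cons x q => cases x <;> simp [GTerm.index] at hp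
    · intro _
      trivial

lemma closed_iff_closedAt (t : GTerm) : Closed t ↔ ClosedAt 0 t := by
  rw [closedAt_iff]
  unfold Closed Free
  rw [Set.eq_empty_iff_forall_notMem]
  constructor
  · intro h p i hp
    have := h p
    simp only [Set.mem_setOf_eq, not_exists] at this
    have h2 := this i
    rw [not_and] at h2
    have := h2 hp
    omega
  · intro h p
    simp only [Set.mem_setOf_eq, not_exists]
    intro i
    rw [not_and]
    intro hp
    have := h p i hp
    omega

lemma closedAt_mono {t : GTerm} : ∀ {d d' : ℕ}, ClosedAt d t → d ≤ d' → ClosedAt d' t := by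
  induction t with
  | var j => intro d d' h hle; simp only [ClosedAt] at *; omega
  | app a b iha ihb => intro d d' h hle; exact ⟨iha h.1 hle, ihb h.2 hle⟩
  | lam a iha => intro d d' h hle; exact iha h (by omega)
  | gvar a => intro _ _ _ _; trivial

lemma shiftAux_var (d j : ℕ) : shiftAux 0 d (.var j) = .var (j + d) := by
  simp [shiftAux]

lemma msubstAux_closedAt (σ : List GTerm) : ∀ (t : GTerm) (d : ℕ),
    ClosedAt d t → msubstAux σ d t = t := by
  intro t
  induction t with
  | var j => intro d h; simp only [ClosedAt] at h; simp [msubstAux, h]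
  | app a b iha ihb => intro d h; simp [msubstAux, iha _ h.1, ihb _ h.2]
  | lam a iha => intro d h; simp [msubstAux, iha _ h]
  | gvar a => intro d _; rfl

lemma msubst_nil : ∀ (t : GTerm) (d : ℕ), msubstAux [] d t = t := by
  intro t
  induction t with
  | var j =>
    intro d
    simp only [msubstAux]
    split
    · rfl
    · rw [List.getD_eq_default _ _ (by simp)]
      rw [shiftAux_var]
      congr 1
      omega
  | app a b iha ihb => intro d; simp [msubstAux, iha, ihb]
  | lam a iha => intro d; simp [msubstAux, iha]
  | gvar a => intro _; rfl

lemma msubstAux_var_shape (σ : List GTerm) (hσ : ∀ v ∈ σ, ∃ w, v = GTerm.gvar w)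
    (j d : ℕ) : (∃ k, msubstAux σ d (.var j) = .var k) ∨
      (∃ w, msubstAux σ d (.var j) = .gvar w) := by
  simp only [msubstAux]
  split
  · exact .inl ⟨j, rfl⟩
  · rcases Nat.lt_or_ge (j - d) σ.length with hl | hl
    · rw [List.getD_eq_getElem _ _ hl]
      obtain ⟨w, hw⟩ := hσ _ (List.getElem_mem hl)
      rw [hw]
      exact .inr ⟨w, rfl⟩
    · rw [List.getD_eq_default _ _ hl, shiftAux_var]
      exact .inl ⟨_, rfl⟩

lemma index_msubstAux (σ : List GTerm) (hσ : ∀ v ∈ σ, ∃ w, v = GTerm.gvar w) :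
    ∀ (t : GTerm) (p : Pos) (d : ℕ),
      (msubstAux σ d t).index p = (t.index p).map (msubstAux σ (d + lamDepth p)) := by
  intro t
  induction t with
  | var j =>
    intro p d
    cases p with
    | nil => rw [index_nil, index_nil]; simp [lamDepth]
    | cons x q =>
      rcases msubstAux_var_shape σ hσ j d with ⟨k, hk⟩ | ⟨w, hw⟩
      · rw [hk]; cases x <;> rfl
      · rw [hw]; cases x <;> rfl
  | app a b iha ihb =>
    intro p d
    cases p with
    | nil => rw [index_nil, index_nil]; simp [lamDepth]
    | cons x q =>
      cases x with
      | down => rfl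
      | left =>
        show (msubstAux σ d a).index q = Option.map (msubstAux σ (d + lamDepth (Dir.left :: q))) (a.index q)
        rw [iha q d, lamDepth_left]
      | right =>
        show (msubstAux σ d b).index q = Option.map (msubstAux σ (d + lamDepth (Dir.right :: q))) (b.index q)
        rw [ihb q d, lamDepth_right]
  | lam a iha =>
    intro p d
    cases p with
    | nil => rw [index_nil, index_nil]; simp [lamDepth]
    | cons x q =>
      cases x with
      | left => rfl
      | right => rfl
      | down =>
        show (msubstAux σ (d + 1) a).index q = Option.map (msubstAux σ (d + lamDepth (Dir.down :: q))) (a.index q)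
        rw [iha q (d + 1), lamDepth_down]
        have : d + 1 + lamDepth q = d + (lamDepth q + 1) := by omega
        rw [this]
  | gvar a =>
    intro p d
    cases p with
    | nil => rw [index_nil, index_nil]; simp [lamDepth]
    | cons x q => cases x <;> rfl

lemma msubstAux_cons (σ : List GTerm) (hσ : ∀ v ∈ σ, ∃ w, v = GTerm.gvar w)
    (x : GTerm) : ∀ (v : GTerm) (e : ℕ),
    ClosedAt e (msubstAux σ (e + 1) v) →
    msubstAux (x :: σ) e v = msubstAux σ (e + 1) v := by
  intro v
  induction v with
  | var j =>
    intro e h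
    rcases Nat.lt_trichotomy j e with hj | hj | hj
    · simp [msubstAux, hj, Nat.lt_succ_of_lt hj]
    · subst hj
      simp only [msubstAux, Nat.lt_succ_self, if_pos] at h ⊢
      simp only [ClosedAt] at h
      omega
    · have h1 : ¬ j < e := by omega
      have h2 : ¬ j < e + 1 := by omega
      simp only [msubstAux, h1, h2, if_neg, not_false_iff]
      have hje : j - e = (j - (e + 1)) + 1 := by omega
      rw [hje, List.getD_cons_succ]
      rcases Nat.lt_or_ge (j - (e + 1)) σ.length with hl | hl
      · rw [List.getD_eq_getElem _ _ hl, List.getD_eq_getElem _ _ hl]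
        obtain ⟨w, hw⟩ := hσ _ (List.getElem_mem hl)
        rw [hw]
        rfl
      · rw [List.getD_eq_default _ _ hl, List.getD_eq_default _ _ hl,
          shiftAux_var, shiftAux_var]
        congr 1
        omega
  | app a b iha ihb =>
    intro e h
    simp only [msubstAux, ClosedAt] at h ⊢
    rw [iha e h.1, ihb e h.2]
  | lam a iha =>
    intro e h
    simp only [msubstAux, ClosedAt] at h ⊢
    rw [iha (e + 1) h]
  | gvar a => intro _ _; rfl

lemma not_closed_var (j : ℕ) : ¬ Closed (.var j) := by
  rw [closed_iff_closedAt]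
  simp [ClosedAt]

lemma main_induction (n : ℕ) :
    (∀ r p u, gsize r ≤ n → r.index p = some u → Closed u →
      (globalize r).index p = some (globalize u)) ∧
    (∀ t (σ : List GTerm) (hσ : ∀ v ∈ σ, ∃ w, v = GTerm.gvar w) r p u v,
      gsize t ≤ n →
      (msubst σ t).index p = some u → Closed u →
      t.index p = some v → (Closed v ∨ v ∈ duplicates r) →
      (globalizeStep r σ hσ t).index p = some (globalize u)) := by
  induction n using Nat.strong_induction_on with
  | _ n ih =>
    have hP : ∀ r p u, gsize r ≤ n → r.index p = some u → Closed u →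
        (globalize r).index p = some (globalize u) := by
      intro r p u hn hu huc
      rw [globalize]
      cases p with
      | nil =>
        rw [index_nil] at hu
        injection hu with hu
        subst hu
        rw [← globalize]
        exact index_nil _
      | cons x q =>
        match r, x with
        | .var j, x =>
          exfalso
          cases x <;> simp [GTerm.index] at hu
        | .gvar a, x =>
          exfalso
          cases x <;> simp [GTerm.index] at hu
        | .app a b, .down => simp [GTerm.index] at hu
        | .app a b, .left =>
          simp only [GTerm.index] at hu
          have hs : gsize a < n := by simp only [gsize] at hn; omega
          rw [globalizeScc]
          show (globalizeStep _ [] _ a).index q = _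
          exact (ih (gsize a) hs).2 a [] (by simp) (.app a b) q u u (le_refl _)
            (by rw [msubst, msubst_nil]; exact hu) huc hu (.inl huc)
        | .app a b, .right =>
          simp only [GTerm.index] at hu
          have hs : gsize b < n := by simp only [gsize] at hn; omega
          rw [globalizeScc]
          show (globalizeStep _ [] _ b).index q = _
          exact (ih (gsize b) hs).2 b [] (by simp) (.app a b) q u u (le_refl _)
            (by rw [msubst, msubst_nil]; exact hu) huc hu (.inl huc)
        | .lam a, .left => simp [GTerm.index] at hu
        | .lam a, .right => simp [GTerm.index] at hu
        | .lam a, .down =>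
          simp only [GTerm.index] at hu
          have hs : gsize a < n := by simp only [gsize] at hn; omega
          rw [globalizeScc]
          show (globalizeStep _ _ _ a).index q = _
          set σ₁ : List GTerm := [.gvar (.app (.lam a) a)] with hσ₁def
          have hσ₁ : ∀ v ∈ σ₁, ∃ w, v = GTerm.gvar w := by
            intro v hv
            rcases List.mem_singleton.mp hv with h
            exact ⟨_, h⟩
          have hmu : (msubst σ₁ a).index q = some u := by
            rw [msubst, index_msubstAux σ₁ hσ₁ a q 0, hu]
            simp only [Option.map_some]
            rw [msubstAux_closedAt σ₁ u _
              (closedAt_mono ((closed_iff_closedAt u).mp huc) (Nat.zero_le _))]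
          exact (ih (gsize a) hs).2 a σ₁ hσ₁ (.lam a) q u u (le_refl _)
            hmu huc hu (.inl huc)
    refine ⟨hP, ?_⟩
    intro t σ hσ r p u v hn hu huc hv hcond
    by_cases hc : Closed t ∨ t ∈ duplicates r
    · rw [globalizeStep, if_pos hc]
      exact hP (msubst σ t) p u (by rw [gsize_msubst σ hσ]; exact hn) hu huc
    · rw [globalizeStep, if_neg hc]
      cases p with
      | nil =>
        exfalso
        rw [index_nil] at hv
        injection hv with hv
        subst hv
        exact hc hcond
      | cons x q =>
        match t, x with
        | .var j, x =>
          exfalso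
          rcases msubstAux_var_shape σ hσ j 0 with ⟨k, hk⟩ | ⟨w, hw⟩ <;>
            [rw [msubst, hk] at hu; rw [msubst, hw] at hu] <;>
            cases x <;> simp [GTerm.index] at hu
        | .gvar a, x =>
          exfalso
          cases x <;> simp [msubst, msubstAux, GTerm.index] at hu
        | .app a b, .down => simp [GTerm.index] at hv
        | .app a b, .left =>
          simp only [GTerm.index] at hv
          simp only [msubst, msubstAux, GTerm.index] at hu
          have hs : gsize a < n := by simp only [gsize] at hn; omega
          rw [globalizeScc]
          show (globalizeStep _ σ _ a).index q = _
          exact (ih (gsize a) hs).2 a σ hσ r q u v (le_refl _) hu huc hv hcond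
        | .app a b, .right =>
          simp only [GTerm.index] at hv
          simp only [msubst, msubstAux, GTerm.index] at hu
          have hs : gsize b < n := by simp only [gsize] at hn; omega
          rw [globalizeScc]
          show (globalizeStep _ σ _ b).index q = _
          exact (ih (gsize b) hs).2 b σ hσ r q u v (le_refl _) hu huc hv hcond
        | .lam a, .left => simp [GTerm.index] at hv
        | .lam a, .right => simp [GTerm.index] at hv
        | .lam a, .down =>
          simp only [GTerm.index] at hv
          simp only [msubst, msubstAux, GTerm.index] at hu
          have hs : gsize a < n := by simp only [gsize] at hn; omega
          rw [globalizeScc]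
          show (globalizeStep _ _ _ a).index q = _
          set σ₁ : List GTerm := .gvar (.app r a) :: σ with hσ₁def
          have hσ₁ : ∀ w ∈ σ₁, ∃ w', w = GTerm.gvar w' := by
            intro w hw
            rcases List.mem_cons.mp hw with h | h
            · exact ⟨_, h⟩
            · exact hσ w h
          -- from hu : (msubstAux σ 1 a).index q = some u
          have heq : u = msubstAux σ (1 + lamDepth q) v := by
            rw [index_msubstAux σ hσ a q 1, hv] at hu
            simpa using hu.symm
          have hclosed : ClosedAt (lamDepth q) (msubstAux σ (lamDepth q + 1) v) := by
            rw [Nat.add_comm] at heq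
            rw [← heq]
            exact closedAt_mono ((closed_iff_closedAt u).mp huc) (Nat.zero_le _)
          have hmu : (msubst σ₁ a).index q = some u := by
            rw [msubst, index_msubstAux σ₁ hσ₁ a q 0, hv]
            simp only [Option.map_some, Nat.zero_add]
            rw [hσ₁def, msubstAux_cons σ hσ _ v (lamDepth q) hclosed]
            rw [heq, Nat.add_comm]
          exact (ih (gsize a) hs).2 a σ₁ hσ₁ r q u v (le_refl _) hmu huc hv hcond

/-- indexing a duplicate subterm moves from `globalizeStep`
into `globalize`. -/
theorem globalizeStep_duplicate (t : GTerm) (σ : List GTerm)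
    (hσ : ∀ v ∈ σ, ∃ w, v = GTerm.gvar w) (r : GTerm) (hr : Closed r)
    (p : Pos) (u : GTerm) (hu : (msubst σ t).index p = some u) (huc : Closed u)
    (v : GTerm) (hv : t.index p = some v) (hdup : v ∈ duplicates r)
    (htσ : Closed (msubst σ t)) (hocc : ∃ q ∈ SCC r, r.index q = some t) :
    (globalizeStep r σ hσ t).index p = some (globalize u) :=
  (main_induction (gsize t)).2 t σ hσ r p u v (le_refl _) hu huc hv (.inr hdup)

end HashAlpha
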